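/- arXiv:2401.04580 — 2 statements merged into one kernel-verified Lean document; each statement's English description precedes it below -/
import Mathlib

section
/- Two bounded probability densities f, g on ℝ^d have the same excess mass transform (f̂(t) = ĝ(t) for all t > 0) if and only if the random variables f(X) and g(Y) have the same distribution, where X has density f and Y has density g. -/
open MeasureTheory

lemma key_Ici {E : Type*} [MeasurableSpace E] {μ : Measure E} (f : E → ℝ)
    (hm : Measurable f) (h0 : ∀ x, 0 ≤ f x) (hint : Integrable f μ) (t : ℝ) :
    Measure.map f (μ.withDensity fun x => ENNReal.ofReal (f x)) (Set.Ici t)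
      = ENNReal.ofReal (∫ x, Set.indicator {x | t ≤ f x} f x ∂μ) := by
  have hS : MeasurableSet {x | t ≤ f x} := hm measurableSet_Ici
  rw [Measure.map_apply hm measurableSet_Ici]
  have : f ⁻¹' Set.Ici t = {x | t ≤ f x} := rfl
  rw [this, withDensity_apply _ hS, integral_indicator hS,
    ← ofReal_integral_eq_lintegral_ofReal (hint.restrict)
      (Filter.Eventually.of_forall fun x => h0 x)]

lemma key_univ {E : Type*} [MeasurableSpace E] {μ : Measure E} (f : E → ℝ)
    (hm : Measurable f) (h0 : ∀ x, 0 ≤ f x) (hint : Integrable f μ)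
    (hprob : ∫ x, f x ∂μ = 1) :
    Measure.map f (μ.withDensity fun x => ENNReal.ofReal (f x)) Set.univ = 1 := by
  rw [Measure.map_apply hm MeasurableSet.univ, Set.preimage_univ,
    withDensity_apply _ MeasurableSet.univ, Measure.restrict_univ,
    ← ofReal_integral_eq_lintegral_ofReal hint (Filter.Eventually.of_forall fun x => h0 x),
    hprob, ENNReal.ofReal_one]

/-- Two bounded probability densities `f, g` on `ℝ^d` have the same excess mass transform
iff the random variables `f(X)` and `g(Y)` (with `X ∼ f`, `Y ∼ g`) have the same distribution. -/
theorem stmt_2 {d : ℕ} (f g : EuclideanSpace ℝ (Fin d) → ℝ)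
    (hf_meas : Measurable f) (hg_meas : Measurable g)
    (hf_nonneg : ∀ x, 0 ≤ f x) (hg_nonneg : ∀ x, 0 ≤ g x)
    (hf_bdd : ∃ C, ∀ x, f x ≤ C) (hg_bdd : ∃ C, ∀ x, g x ≤ C)
    (hf_int : Integrable f) (hg_int : Integrable g)
    (hf_prob : ∫ x, f x = 1) (hg_prob : ∫ x, g x = 1)
    (fhat ghat : ℝ → ℝ)
    (hfhat : fhat = fun t => ∫ x, Set.indicator {x | t ≤ f x} f x)
    (hghat : ghat = fun t => ∫ x, Set.indicator {x | t ≤ g x} g x) :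
    (∀ t : ℝ, 0 < t → fhat t = ghat t) ↔
      Measure.map f (MeasureTheory.volume.withDensity fun x => ENNReal.ofReal (f x)) =
      Measure.map g (MeasureTheory.volume.withDensity fun x => ENNReal.ofReal (g x)) := by
  subst hfhat hghat
  set μf := Measure.map f (MeasureTheory.volume.withDensity fun x => ENNReal.ofReal (f x)) with hμf
  set μg := Measure.map g (MeasureTheory.volume.withDensity fun x => ENNReal.ofReal (g x)) with hμg
  have hfI : ∀ t, μf (Set.Ici t) = ENNReal.ofReal (∫ x, Set.indicator {x | t ≤ f x} f x) :=
    key_Ici f hf_meas hf_nonneg hf_int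
  have hgI : ∀ t, μg (Set.Ici t) = ENNReal.ofReal (∫ x, Set.indicator {x | t ≤ g x} g x) :=
    key_Ici g hg_meas hg_nonneg hg_int
  have hfu : μf Set.univ = 1 := key_univ f hf_meas hf_nonneg hf_int hf_prob
  have hgu : μg Set.univ = 1 := key_univ g hg_meas hg_nonneg hg_int hg_prob
  constructor
  · intro h
    have : IsFiniteMeasure μf := ⟨by rw [hfu]; exact ENNReal.one_lt_top⟩
    refine Measure.ext_of_Ici μf μg fun t => ?_
    rcases le_or_gt t 0 with ht | ht
    · have hfull : ∀ (h : EuclideanSpace ℝ (Fin d) → ℝ) (hn : ∀ x, 0 ≤ h x),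
          {x | t ≤ h x} = Set.univ := fun h hn =>
        Set.eq_univ_of_forall fun x => ht.trans (hn x)
      rw [hfI t, hgI t, hfull f hf_nonneg, hfull g hg_nonneg]
      simp [hf_prob, hg_prob]
    · rw [hfI t, hgI t]
      exact congrArg ENNReal.ofReal (h t ht)
  · intro h t _
    have hnn : ∀ (h : EuclideanSpace ℝ (Fin d) → ℝ) (hn : ∀ x, 0 ≤ h x),
        0 ≤ ∫ x, Set.indicator {x | t ≤ h x} h x := fun h hn =>
      integral_nonneg fun x => Set.indicator_nonneg (fun y _ => hn y) x
    have := hfI t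
    rw [h, hgI t] at this
    have := ENNReal.ofReal_eq_ofReal_iff (hnn g hg_nonneg) (hnn f hf_nonneg) |>.mp this
    linarith
end

section
/- For the two-dimensional standard normal density f(x) = (1/2π) exp(−|x|²/2), the transform formula yields EECC equal to exp(−Λ/(2π)): that is, ∫_{ℝ²} f(x) e^{-Λ f(x)} (1 − Λ f(x)) dx = e^{−Λ/(2π)} for each Λ > 0. -/
open MeasureTheory Real

lemma aux_sq_deriv (r : ℝ) : HasDerivAt (fun y : ℝ => -y ^ 2 / 2) (-r) r := by
  refine (((hasDerivAt_pow 2 r).neg).div_const 2).congr_deriv ?_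
  push_cast
  ring

lemma aux_deriv (c Λ : ℝ) (r : ℝ) :
    HasDerivAt (fun y : ℝ => -(c * Real.exp (-y ^ 2 / 2) *
        Real.exp (-(Λ * (c * Real.exp (-y ^ 2 / 2))))))
      (r * (c * Real.exp (-r ^ 2 / 2) *
        (Real.exp (-(Λ * (c * Real.exp (-r ^ 2 / 2)))) *
          (1 - Λ * (c * Real.exp (-r ^ 2 / 2)))))) r := by
  have hu : HasDerivAt (fun y : ℝ => Real.exp (-y ^ 2 / 2))
      (-r * Real.exp (-r ^ 2 / 2)) r := by
    simpa [mul_comm] using (aux_sq_deriv r).exp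
  set u := Real.exp (-r ^ 2 / 2)
  have h2 : HasDerivAt (fun y : ℝ => -(Λ * (c * Real.exp (-y ^ 2 / 2))))
      (-(Λ * (c * (-r * u)))) r := ((hu.const_mul c).const_mul Λ).neg
  have h3 := h2.exp
  have h4 := ((hu.const_mul c).mul h3).neg
  refine h4.congr_deriv ?_
  ring

lemma aux_tendsto_sq : Filter.Tendsto (fun y : ℝ => Real.exp (-y ^ 2 / 2))
    Filter.atTop (nhds 0) := by
  apply Real.tendsto_exp_atBot.comp
  have h1 : Filter.Tendsto (fun y : ℝ => y ^ 2) Filter.atTop Filter.atTop :=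
    Filter.tendsto_pow_atTop two_ne_zero
  have h2 : Filter.Tendsto (fun y : ℝ => -(y ^ 2)) Filter.atTop Filter.atBot :=
    Filter.tendsto_neg_atBot_iff.mpr h1
  have h3 := h2.atBot_div_const (by norm_num : (0:ℝ) < 2)
  simpa [neg_div] using h3

/-- For the 2D standard normal density `f(x) = (1/2π) exp(−|x|²/2)`, the transform formula
yields `∫ f(x) e^{-Λ f(x)} (1 − Λ f(x)) dx = e^{−Λ/(2π)}` for every `Λ > 0`. -/
theorem stmt_10 (f : EuclideanSpace ℝ (Fin 2) → ℝ)
    (hf : f = fun x => (1 / (2 * π)) * Real.exp (-‖x‖ ^ 2 / 2)) :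
    ∀ Λ : ℝ, 0 < Λ →
      ∫ x, f x * (Real.exp (-(Λ * f x)) * (1 - Λ * f x)) =
        Real.exp (-(Λ / (2 * π))) := by
  intro Λ hΛ
  have hπ : (0 : ℝ) < π := Real.pi_pos
  set c : ℝ := 1 / (2 * π) with hc
  have hc0 : 0 < c := by positivity
  set g : ℝ → ℝ := fun r => c * Real.exp (-r ^ 2 / 2) *
      (Real.exp (-(Λ * (c * Real.exp (-r ^ 2 / 2)))) *
        (1 - Λ * (c * Real.exp (-r ^ 2 / 2)))) with hg
  have hfx : ∀ x : EuclideanSpace ℝ (Fin 2),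
      f x * (Real.exp (-(Λ * f x)) * (1 - Λ * f x)) = g ‖x‖ := by
    intro x; rw [hf]
  rw [show (∫ x, f x * (Real.exp (-(Λ * f x)) * (1 - Λ * f x))) = ∫ x, g ‖x‖ by
    exact integral_congr_ae (Filter.Eventually.of_forall hfx)]
  rw [MeasureTheory.integral_fun_norm_addHaar (volume : Measure (EuclideanSpace ℝ (Fin 2))) g]
  have hdim : Module.finrank ℝ (EuclideanSpace ℝ (Fin 2)) = 2 := by
    simp [finrank_euclideanSpace]
  rw [hdim]
  have hball : (volume (Metric.ball (0 : EuclideanSpace ℝ (Fin 2)) 1)).toReal = π := by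
    rw [EuclideanSpace.volume_ball]
    rw [Fintype.card_fin]
    rw [show ((2 : ℕ) : ℝ) / 2 + 1 = 2 by norm_num, Real.Gamma_two]
    rw [Real.sq_sqrt hπ.le]
    simp [ENNReal.toReal_ofReal hπ.le]
  rw [measureReal_def, hball]
  have key : ∫ y in Set.Ioi (0 : ℝ), y ^ (2 - 1) • g y = c * Real.exp (-(Λ * c)) := by
    rw [show (2 - 1 : ℕ) = 1 from rfl]
    simp only [pow_one, smul_eq_mul]
    set F : ℝ → ℝ := fun y => -(c * Real.exp (-y ^ 2 / 2) *
        Real.exp (-(Λ * (c * Real.exp (-y ^ 2 / 2))))) with hF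
    have hderiv : ∀ r ∈ Set.Ioi (0 : ℝ), HasDerivAt F (r * g r) r := fun r _ => aux_deriv c Λ r
    have hcont : ContinuousWithinAt F (Set.Ici 0) 0 :=
      ((aux_deriv c Λ 0).continuousAt).continuousWithinAt
    have htend : Filter.Tendsto F Filter.atTop (nhds 0) := by
      have h1 := aux_tendsto_sq
      have h2 : Filter.Tendsto (fun y : ℝ => Real.exp (-(Λ * (c * Real.exp (-y ^ 2 / 2)))))
          Filter.atTop (nhds (Real.exp (-(Λ * (c * 0))))) :=
        (Real.continuous_exp.tendsto _).comp (((h1.const_mul c).const_mul Λ).neg)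
      have := ((h1.const_mul c).mul h2).neg
      simpa using this
    have hint : IntegrableOn (fun r => r * g r) (Set.Ioi 0) := by
      have hbase : IntegrableOn (fun x : ℝ => x ^ (1 : ℝ) * Real.exp (-(1/2 : ℝ) * x ^ 2))
          (Set.Ioi 0) := integrableOn_rpow_mul_exp_neg_mul_sq (by norm_num) (by norm_num)
      apply Integrable.mono' (hbase.const_mul ((1 + Λ * c) * c))
      · apply Measurable.aestronglyMeasurable
        apply Measurable.mul measurable_id
        apply Measurable.mul
        · exact (measurable_id.pow_const 2).neg.div_const 2 |>.exp.const_mul c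
        · apply Measurable.mul
          · exact (((measurable_id.pow_const 2).neg.div_const 2
              |>.exp.const_mul c).const_mul Λ).neg.exp
          · exact measurable_const.sub (((measurable_id.pow_const 2).neg.div_const 2
              |>.exp.const_mul c).const_mul Λ)
      · filter_upwards [self_mem_ae_restrict measurableSet_Ioi] with r hr
        have hr0 : 0 < r := hr
        have hu0 : 0 < Real.exp (-r ^ 2 / 2) := Real.exp_pos _
        have hu1 : Real.exp (-r ^ 2 / 2) ≤ 1 := Real.exp_le_one_iff.mpr (by nlinarith)
        have ht0 : 0 ≤ Λ * (c * Real.exp (-r ^ 2 / 2)) := by positivity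
        have ht1 : Λ * (c * Real.exp (-r ^ 2 / 2)) ≤ Λ * c := by nlinarith
        have he1 : Real.exp (-(Λ * (c * Real.exp (-r ^ 2 / 2)))) ≤ 1 :=
          Real.exp_le_one_iff.mpr (by linarith)
        have he0 : 0 < Real.exp (-(Λ * (c * Real.exp (-r ^ 2 / 2)))) := Real.exp_pos _
        have habs : |1 - Λ * (c * Real.exp (-r ^ 2 / 2))| ≤ 1 + Λ * c := by
          rw [abs_le]; constructor <;> [linarith; linarith]
        rw [hg]
        calc |r * (c * Real.exp (-r ^ 2 / 2) *
              (Real.exp (-(Λ * (c * Real.exp (-r ^ 2 / 2)))) *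
                (1 - Λ * (c * Real.exp (-r ^ 2 / 2)))))|
            = r * (c * Real.exp (-r ^ 2 / 2) *
              (Real.exp (-(Λ * (c * Real.exp (-r ^ 2 / 2)))) *
                |1 - Λ * (c * Real.exp (-r ^ 2 / 2))|)) := by
              simp only [abs_mul, abs_of_pos hr0, abs_of_pos hc0, abs_of_pos hu0,
                abs_of_pos he0]
          _ ≤ r * (c * Real.exp (-r ^ 2 / 2) * (1 * (1 + Λ * c))) := by
              gcongr
          _ = (1 + Λ * c) * c * (r ^ (1 : ℝ) * Real.exp (-(1/2 : ℝ) * r ^ 2)) := by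
              rw [Real.rpow_one, show (-(1/2 : ℝ) * r ^ 2) = -r ^ 2 / 2 by ring]
              ring
    have := MeasureTheory.integral_Ioi_of_hasDerivAt_of_tendsto hcont hderiv hint htend
    rw [this, hF]
    norm_num
  rw [key]
  have h2c : 2 * π * c = 1 := by rw [hc]; field_simp
  rw [show (2 : ℕ) • π • (c * Real.exp (-(Λ * c))) = (2 * π * c) * Real.exp (-(Λ * c)) by
    simp only [smul_eq_mul, nsmul_eq_mul]; push_cast; ring]
  rw [h2c, one_mul, hc]
  ring_nf
end
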